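/- Let A and B be unital prime complex *-algebras whose centers equal ℂ·1 and which each contain a nontrivial projection, and let Φ : A → B be a bijective mapping satisfying Φ(xy − yx*) = Φ(x)Φ(y) − Φ(y)Φ(x)* for all x, y ∈ A. Then either Φ(ia) = iΦ(a) for all elements a ∈ A, or Φ(ia) = −iΦ(a) for all elements a ∈ A. -/
import Mathlib


/-- Lemma 2.6': either Φ(ia) = iΦ(a) for all a, or Φ(ia) = −iΦ(a)
for all a. -/
theorem stmt_13 {A B : Type*}
    [Ring A] [Algebra ℂ A] [StarRing A] [StarModule ℂ A]
    [Ring B] [Algebra ℂ B] [StarRing B] [StarModule ℂ B]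
    (hAprime : ∀ a b : A, (∀ x : A, a * x * b = 0) → a = 0 ∨ b = 0)
    (hBprime : ∀ a b : B, (∀ x : B, a * x * b = 0) → a = 0 ∨ b = 0)
    (hAcenter : ∀ a : A, (∀ x : A, a * x = x * a) → ∃ c : ℂ, a = c • (1 : A))
    (hBcenter : ∀ b : B, (∀ x : B, b * x = x * b) → ∃ c : ℂ, b = c • (1 : B))
    (hAproj : ∃ p : A, p ≠ 0 ∧ p ≠ 1 ∧ star p = p ∧ p * p = p)
    (hBproj : ∃ q : B, q ≠ 0 ∧ q ≠ 1 ∧ star q = q ∧ q * q = q)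
    (Φ : A → B) (hΦ : Function.Bijective Φ)
    (h : ∀ x y : A, Φ (x * y - y * star x) = Φ x * Φ y - Φ y * star (Φ x)) :
    (∀ a : A, Φ (Complex.I • a) = Complex.I • Φ a) ∨
    (∀ a : A, Φ (Complex.I • a) = -(Complex.I • Φ a)) := by
  obtain ⟨q, hq0, hq1, hqs, hqq⟩ := hBproj
  have hBnt : Nontrivial B := ⟨q, 0, hq0⟩
  have halg : Function.Injective (algebraMap ℂ B) := RingHom.injective _
  set t := Φ ((Complex.I / 2) • (1 : A)) with ht
  -- key1 : Φ (I • y) = t * Φ y - Φ y * star t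
  have key1 : ∀ y : A, Φ (Complex.I • y) = t * Φ y - Φ y * star t := by
    intro y
    have e := h ((Complex.I / 2) • (1 : A)) y
    have harg : ((Complex.I / 2) • (1 : A)) * y - y * star ((Complex.I / 2) • (1 : A))
        = Complex.I • y := by
      rw [star_smul, star_one, smul_mul_assoc, one_mul, mul_smul_comm, mul_one,
        ← sub_smul]
      congr 1
      simp [Complex.ext_iff]
      norm_num
    rw [harg] at e
    exact e
  -- the skew Lie product intertwining identity
  have key2 : ∀ a b : B,
      t * (a * b - b * star a) - (a * b - b * star a) * star t
        = a * (t * b - b * star t) - (t * b - b * star t) * star a := by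
    intro a b
    obtain ⟨x, rfl⟩ := hΦ.2 a
    obtain ⟨y, rfl⟩ := hΦ.2 b
    have e1 : Φ (Complex.I • (x * y - y * star x))
        = t * (Φ x * Φ y - Φ y * star (Φ x)) - (Φ x * Φ y - Φ y * star (Φ x)) * star t := by
      rw [key1, h]
    have harg : x * (Complex.I • y) - (Complex.I • y) * star x
        = Complex.I • (x * y - y * star x) := by
      rw [mul_smul_comm, smul_mul_assoc, smul_sub]
    have e2 : Φ (Complex.I • (x * y - y * star x))
        = Φ x * (t * Φ y - Φ y * star t) - (t * Φ y - Φ y * star t) * star (Φ x) := by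
      rw [← key1 y, ← harg, h]
    rw [e2] at e1
    exact e1.symm
  -- commutator with t is skew and central
  have key3 : ∀ a b : B, (t * a - a * t) * b = - (b * star (t * a - a * t)) := by
    intro a b
    have expand : (t * a - a * t) * b + b * star (t * a - a * t)
        = (t * (a * b - b * star a) - (a * b - b * star a) * star t)
          - (a * (t * b - b * star t) - (t * b - b * star t) * star a) := by
      simp only [star_sub, star_mul]
      noncomm_ring
    rw [key2, sub_self] at expand
    exact eq_neg_of_add_eq_zero_left expand
  have skew : ∀ a : B, star (t * a - a * t) = - (t * a - a * t) := by
    intro a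
    have := key3 a 1
    rw [mul_one, one_mul] at this
    exact neg_eq_iff_eq_neg.mp this.symm
  have central : ∀ a b : B, (t * a - a * t) * b = b * (t * a - a * t) := by
    intro a b
    rw [key3, skew, mul_neg, neg_neg]
  -- every commutator is a scalar
  have scal : ∀ a : B, ∃ c : ℂ, t * a - a * t = c • (1 : B) := fun a =>
    hBcenter _ (central a)
  -- t commutes with everything
  have tcomm : ∀ a : B, t * a = a * t := by
    intro a
    obtain ⟨c, hc⟩ := scal a
    obtain ⟨c2, hc2⟩ := scal (a * a)
    by_cases hc0 : c = 0
    · rw [hc0, zero_smul] at hc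
      exact sub_eq_zero.mp hc
    · exfalso
      have expand2 : t * (a * a) - (a * a) * t = (t * a - a * t) * a + a * (t * a - a * t) := by
        noncomm_ring
      rw [hc, hc2, smul_mul_assoc, one_mul, mul_smul_comm, mul_one, ← add_smul] at expand2
      have h2c : (c + c) ≠ 0 := by
        simpa [add_self_eq_zero] using hc0
      have ha : a = ((c + c)⁻¹ * c2) • (1 : B) := by
        have h1 : a = (c + c)⁻¹ • ((c + c) • a) := by
          rw [smul_smul, inv_mul_cancel₀ h2c, one_smul]
        rw [h1, ← expand2, smul_smul]
      have : t * a - a * t = 0 := by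
        rw [ha, smul_mul_assoc, one_mul, mul_smul_comm, mul_one, sub_self]
      rw [hc] at this
      have : c = 0 := by
        apply halg
        rw [map_zero, Algebra.algebraMap_eq_smul_one, this]
      exact hc0 this
  obtain ⟨τ, hτ⟩ := hBcenter t tcomm
  set κ := τ - starRingEnd ℂ τ with hκdef
  have key1' : ∀ y : A, Φ (Complex.I • y) = κ • Φ y := by
    intro y
    rw [key1, hτ, star_smul, star_one, smul_mul_assoc, one_mul, mul_smul_comm, mul_one,
      ← sub_smul]
    rfl
  -- κ ^ 4 = 1
  have hκ4 : κ ^ 4 = 1 := by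
    obtain ⟨y1, hy1⟩ := hΦ.2 (1 : B)
    have e : Φ y1 = (κ ^ 4) • Φ y1 := by
      have : y1 = Complex.I • (Complex.I • (Complex.I • (Complex.I • y1))) := by
        rw [smul_smul, smul_smul, smul_smul]
        norm_num [Complex.I_sq]
      calc Φ y1 = Φ (Complex.I • (Complex.I • (Complex.I • (Complex.I • y1)))) := by rw [← this]
        _ = (κ ^ 4) • Φ y1 := by
            rw [key1', key1', key1', key1', smul_smul, smul_smul, smul_smul]
            ring_nf
    rw [hy1] at e
    apply halg
    rw [map_one, Algebra.algebraMap_eq_smul_one]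
    exact e.symm
  have hκskew : (starRingEnd ℂ) κ = -κ := by
    simp [hκdef, sub_eq_neg_add]
  -- κ = I or κ = -I
  have hre : κ.re = 0 := by
    have := congrArg Complex.re hκskew
    simp [Complex.conj_re] at this
    linarith
  have him : κ.im = 1 ∨ κ.im = -1 := by
    have h4 : (κ.im) ^ 4 = 1 := by
      have : κ = Complex.I * (κ.im : ℂ) := by
        apply Complex.ext <;> simp [hre]
      rw [this] at hκ4
      have := hκ4
      rw [mul_pow] at this
      norm_num [Complex.I_pow_four] at this
      exact_mod_cast this
    have h2 : (κ.im - 1) * (κ.im + 1) = 0 := by nlinarith [sq_nonneg (κ.im ^ 2 + 1)]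
    rcases mul_eq_zero.mp h2 with h2 | h2
    · exact Or.inl (by linarith)
    · exact Or.inr (by linarith)
  rcases him with him | him
  · left
    intro a
    rw [key1']
    congr 1
    apply Complex.ext <;> simp [hre, him]
  · right
    intro a
    rw [key1', ← neg_smul]
    congr 1
    apply Complex.ext <;> simp [hre, him]
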